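/- Weighting representation of the generalized mediation functional (K = 1, discrete case): for discrete X, A, M, Y with positivity, Σ_{x,m} E[Y | x, a₂, m] p(m | x, a₁) p(x) = E[ 1{A = a₂} / p(a₂ | X) · p(M | X, a₁) / p(M | X, a₂) · Y ], where p denotes conditional probability mass functions. -/

import Mathlib

open Finset

variable {Ω : Type*}

/-- Probability of the event `s` under the weight function `w` on a finite sample space. -/
noncomputable def Pr [Fintype Ω] (w : Ω → ℝ) (s : Set Ω) : ℝ :=
  ∑ ω, Set.indicator s w ω

/-- Conditional probability of `s` given `t`. -/
noncomputable def cPr [Fintype Ω] (w : Ω → ℝ) (s t : Set Ω) : ℝ :=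
  Pr w (s ∩ t) / Pr w t

/-- Conditional expectation of `Y` given the event `t`. -/
noncomputable def cExp [Fintype Ω] (w : Ω → ℝ) (Y : Ω → ℝ) (t : Set Ω) : ℝ :=
  (∑ ω, Set.indicator t (fun ω' => w ω' * Y ω') ω) / Pr w t


open Classical in
lemma Pr_eq_filter [Fintype Ω] (w : Ω → ℝ) (s : Set Ω) :
    Pr w s = ∑ ω ∈ univ.filter (fun ω => ω ∈ s), w ω := by
  rw [Pr, Finset.sum_filter]
  exact Finset.sum_congr rfl fun ω _ => by rw [Set.indicator_apply]

open Classical in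
lemma ind_sum_eq_filter [Fintype Ω] (f : Ω → ℝ) (s : Set Ω) :
    (∑ ω, Set.indicator s f ω) = ∑ ω ∈ univ.filter (fun ω => ω ∈ s), f ω := by
  rw [Finset.sum_filter]
  exact Finset.sum_congr rfl fun ω _ => by rw [Set.indicator_apply]

lemma le_Pr [Fintype Ω] (w : Ω → ℝ) (hw : ∀ ω, 0 ≤ w ω) {s : Set Ω} {ω : Ω} (h : ω ∈ s) :
    w ω ≤ Pr w s := by
  classical
  rw [Pr_eq_filter]
  exact Finset.single_le_sum (fun i _ => hw i) (by simp [h])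

lemma Pr_mono [Fintype Ω] (w : Ω → ℝ) (hw : ∀ ω, 0 ≤ w ω) {s t : Set Ω} (h : s ⊆ t) :
    Pr w s ≤ Pr w t := by
  classical
  rw [Pr_eq_filter, Pr_eq_filter]
  exact Finset.sum_le_sum_of_subset_of_nonneg
    (Finset.monotone_filter_right _ (fun ω _ hs => h hs))
    (fun i _ _ => hw i)

lemma Pr_nonneg [Fintype Ω] (w : Ω → ℝ) (hw : ∀ ω, 0 ≤ w ω) (s : Set Ω) :
    0 ≤ Pr w s := by
  classical
  rw [Pr_eq_filter]; exact Finset.sum_nonneg fun i _ => hw i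

/-- Weighting representation of the generalized mediation functional (K = 1, discrete):
`Σ_{x,m} E[Y | x, a₂, m] p(m | x, a₁) p(x)
  = E[1{A = a₂}/p(a₂|X) · p(M|X,a₁)/p(M|X,a₂) · Y]`. -/
theorem gmf_weighting_representation [Fintype Ω] {χ σM : Type*} [Fintype χ] [Fintype σM]
    (w : Ω → ℝ) (hw : ∀ ω, 0 ≤ w ω) (hw1 : ∑ ω, w ω = 1)
    (X : Ω → χ) (A : Ω → Bool) (M : Ω → σM) (Y : Ω → ℝ) (a₁ a₂ : Bool)
    (hpos : ∀ ω, 0 < w ω → ∀ b : Bool,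
      0 < cPr w {ω' | A ω' = b} {ω' | X ω' = X ω} ∧
      0 < cPr w {ω' | M ω' = M ω} {ω' | X ω' = X ω ∧ A ω' = b}) :
    ∑ x : χ, ∑ m : σM,
        cExp w Y {ω | X ω = x ∧ A ω = a₂ ∧ M ω = m} *
          cPr w {ω | M ω = m} {ω | X ω = x ∧ A ω = a₁} * Pr w {ω | X ω = x}
      = ∑ ω, w ω * ((if A ω = a₂ then (1 : ℝ) else 0) /
            cPr w {ω' | A ω' = a₂} {ω' | X ω' = X ω} *
          (cPr w {ω' | M ω' = M ω} {ω' | X ω' = X ω ∧ A ω' = a₁} /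
            cPr w {ω' | M ω' = M ω} {ω' | X ω' = X ω ∧ A ω' = a₂}) * Y ω) := by

  classical
  rw [← Finset.sum_fiberwise_of_maps_to (t := (univ : Finset (χ × σM)))
      (g := fun ω => (X ω, M ω)) (fun ω _ => mem_univ _), Fintype.sum_prod_type]
  refine Finset.sum_congr rfl fun x _ => Finset.sum_congr rfl fun m _ => ?_
  set Px := Pr w {ω | X ω = x} with hPx
  set P1 := Pr w {ω | X ω = x ∧ A ω = a₁} with hP1
  set P2 := Pr w {ω | X ω = x ∧ A ω = a₂} with hP2
  set Pm1 := Pr w ({ω | M ω = m} ∩ {ω | X ω = x ∧ A ω = a₁}) with hPm1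
  set Pm2 := Pr w ({ω | M ω = m} ∩ {ω | X ω = x ∧ A ω = a₂}) with hPm2
  set S := ∑ ω ∈ univ.filter (fun ω => X ω = x ∧ A ω = a₂ ∧ M ω = m), w ω * Y ω with hS
  have hset2 : {ω | X ω = x ∧ A ω = a₂ ∧ M ω = m}
      = {ω | M ω = m} ∩ {ω | X ω = x ∧ A ω = a₂} := by
    ext ω; simp [Set.mem_inter_iff]; tauto
  have hsetA : {ω | A ω = a₂} ∩ {ω | X ω = x} = {ω | X ω = x ∧ A ω = a₂} := by
    ext ω; simp [Set.mem_inter_iff]; tauto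
  -- rewrite the fiber sum
  have hfib : ∑ ω ∈ univ.filter (fun ω => (X ω, M ω) = (x, m)),
      (w ω * ((if A ω = a₂ then (1 : ℝ) else 0) /
            cPr w {ω' | A ω' = a₂} {ω' | X ω' = X ω} *
          (cPr w {ω' | M ω' = M ω} {ω' | X ω' = X ω ∧ A ω' = a₁} /
            cPr w {ω' | M ω' = M ω} {ω' | X ω' = X ω ∧ A ω' = a₂}) * Y ω))
      = S * (1 / (P2 / Px) * ((Pm1 / P1) / (Pm2 / P2))) := by
    have step1 : ∀ ω ∈ univ.filter (fun ω => (X ω, M ω) = (x, m)),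
        (w ω * ((if A ω = a₂ then (1 : ℝ) else 0) /
            cPr w {ω' | A ω' = a₂} {ω' | X ω' = X ω} *
          (cPr w {ω' | M ω' = M ω} {ω' | X ω' = X ω ∧ A ω' = a₁} /
            cPr w {ω' | M ω' = M ω} {ω' | X ω' = X ω ∧ A ω' = a₂}) * Y ω))
        = (if A ω = a₂ then w ω * Y ω *
            (1 / (P2 / Px) * ((Pm1 / P1) / (Pm2 / P2))) else 0) := by
      intro ω hω
      simp only [mem_filter, mem_univ, true_and, Prod.mk.injEq] at hω
      obtain ⟨hX, hM⟩ := hω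
      rw [hX, hM]
      simp only [cPr, hsetA, hPx, hP1, hP2, hPm1, hPm2]
      split <;> ring
    rw [Finset.sum_congr rfl step1, Finset.sum_ite, Finset.sum_const_zero, add_zero,
      Finset.filter_filter]
    rw [show (univ.filter fun ω => (X ω, M ω) = (x, m) ∧ A ω = a₂)
        = univ.filter (fun ω => X ω = x ∧ A ω = a₂ ∧ M ω = m) from by
      apply Finset.filter_congr; intro ω _; simp [Prod.ext_iff]; tauto]
    rw [← Finset.sum_mul, hS]
  rw [hfib]
  -- rewrite the left-hand term
  have hcExp : cExp w Y {ω | X ω = x ∧ A ω = a₂ ∧ M ω = m} = S / Pm2 := by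
    rw [cExp, hset2, ind_sum_eq_filter, hPm2, hS]
    congr 1
    apply Finset.sum_congr _ fun ω _ => rfl
    ext ω; simp [Set.mem_inter_iff]; tauto
  rw [hcExp, cPr, ← hPm1, ← hP1]
  -- now pure arithmetic
  rcases eq_or_ne S 0 with hS0 | hS0
  · simp [hS0]
  · obtain ⟨ω₀, hω₀mem, hω₀⟩ := Finset.exists_ne_zero_of_sum_ne_zero hS0
    simp only [mem_filter, mem_univ, true_and] at hω₀mem
    have hwpos : 0 < w ω₀ := (hw ω₀).lt_of_ne' (left_ne_zero_of_mul hω₀)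
    have hPm2pos : 0 < Pm2 := lt_of_lt_of_le hwpos
      (le_Pr w hw (by simp [Set.mem_inter_iff, hω₀mem.1, hω₀mem.2.1, hω₀mem.2.2]))
    have hP2pos : 0 < P2 := lt_of_lt_of_le hwpos
      (le_Pr w hw (by simp [hω₀mem.1, hω₀mem.2.1]))
    have hPxpos : 0 < Px := lt_of_lt_of_le hwpos (le_Pr w hw (by simp [hω₀mem.1]))
    rcases eq_or_ne P1 0 with hP10 | hP10
    · have hPm10 : Pm1 = 0 := le_antisymm
        (hP10 ▸ Pr_mono w hw Set.inter_subset_right) (Pr_nonneg w hw _)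
      simp [hPm10]
    · field_simp
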